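/- (Correctness of the 3-SAT-to-ReLU reduction.) Let φ be a 3-CNF formula with m clauses over n Boolean variables and let f_φ : ℝ^n → ℝ be the associated ReLU network. Then φ is satisfiable if and only if there exists x ∈ [0,1]^n with f_φ(x) > 0 (equivalently, f_φ is not identically zero on [0,1]^n; note f_φ(x) ≥ 0 for all x). -/
import Mathlib


/-- The ReLU function `σ(t) = max(t, 0)`. -/
def relu (t : ℝ) : ℝ := max t 0

/-- A literal over `n` Boolean variables: a variable index together with a
negation flag (`neg = true` means the literal is `¬ s_var`). -/
structure Literal (n : ℕ) where
  var : Fin n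
  neg : Bool

/-- A 3-CNF formula with `m` clauses over `n` variables: each clause consists of
three literals. -/
def CNF3 (n m : ℕ) := Fin m → Fin 3 → Literal n

/-- A literal is satisfied by an assignment `s`. -/
def litSat {n : ℕ} (s : Fin n → Prop) (t : Literal n) : Prop :=
  if t.neg then ¬ s t.var else s t.var

/-- A clause (three literals) is satisfied by an assignment `s` if some literal
in it is satisfied. -/
def clauseSat {n : ℕ} (s : Fin n → Prop) (C : Fin 3 → Literal n) : Prop :=
  ∃ j, litSat s (C j)

/-- The value `z_{i,j}(x)`: `σ(2 x_k − 1)` for the literal `s_k` and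
`σ(1 − 2 x_k)` for the literal `¬ s_k`. -/
def zval {n : ℕ} (t : Literal n) (x : Fin n → ℝ) : ℝ :=
  if t.neg then relu (1 - 2 * x t.var) else relu (2 * x t.var - 1)

/-- The clause gadget
`f_i(x) = σ(z_{i,1} + z_{i,2} + z_{i,3}) − σ(z_{i,1} + z_{i,2} + z_{i,3} − 1)`. -/
noncomputable def clauseGadget {n : ℕ} (C : Fin 3 → Literal n) (x : Fin n → ℝ) : ℝ :=
  relu (∑ j, zval (C j) x) - relu ((∑ j, zval (C j) x) - 1)

/-- The ReLU network associated to a 3-CNF formula: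
`f_φ(x) = σ((Σ_{i=1}^m f_i(x)) − m + 1)`. -/
noncomputable def cnfNet {n m : ℕ} (φ : CNF3 n m) (x : Fin n → ℝ) : ℝ :=
  relu ((∑ i, clauseGadget (φ i) x) - m + 1)

lemma relu_nonneg (t : ℝ) : 0 ≤ relu t := le_max_right _ _

lemma zval_nonneg {n : ℕ} (t : Literal n) (x : Fin n → ℝ) : 0 ≤ zval t x := by
  unfold zval; split <;> exact relu_nonneg _

lemma relu_pos_iff (t : ℝ) : 0 < relu t ↔ 0 < t := by
  unfold relu
  rcases le_total t 0 with h | h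
  · simp [max_eq_right h]; linarith
  · simp [max_eq_left h]

lemma gadget_le_one (S : ℝ) : relu S - relu (S - 1) ≤ 1 := by
  unfold relu
  rcases le_total S 0 with h | h
  · rw [max_eq_right h]; nlinarith [le_max_right (S-1) (0:ℝ)]
  · rw [max_eq_left h]; rcases le_total (S-1) 0 with h1 | h1
    · rw [max_eq_right h1]; linarith
    · rw [max_eq_left h1]; linarith

lemma gadget_eq_one {S : ℝ} (h : 1 ≤ S) : relu S - relu (S - 1) = 1 := by
  unfold relu
  rw [max_eq_left (by linarith), max_eq_left (by linarith)]; ring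

lemma gadget_pos {S : ℝ} (h : 0 < S) : 0 < relu S - relu (S - 1) := by
  unfold relu
  rw [max_eq_left h.le]
  rcases le_total (S-1) 0 with h1 | h1
  · rw [max_eq_right h1]; linarith
  · rw [max_eq_left h1]; linarith

lemma pos_of_gadget_pos {S : ℝ} (h : 0 < relu S - relu (S - 1)) : 0 < S := by
  by_contra hc
  push_neg at hc
  have : relu S = 0 := by unfold relu; exact max_eq_right hc
  have := relu_nonneg (S - 1)
  linarith

theorem cnf_satisfiable_iff_net_positive {n m : ℕ} (φ : CNF3 n m) :
    (∃ s : Fin n → Prop, ∀ i, clauseSat s (φ i)) ↔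
      ∃ x : Fin n → ℝ, (∀ k, x k ∈ Set.Icc (0 : ℝ) 1) ∧ 0 < cnfNet φ x := by
  classical
  constructor
  · rintro ⟨s, hs⟩
    refine ⟨fun k => if s k then 1 else 0, fun k => ?_, ?_⟩
    · by_cases h : s k <;> simp [h]
    · set x : Fin n → ℝ := fun k => if s k then 1 else 0 with hx
      have hgad : ∀ i, clauseGadget (φ i) x = 1 := by
        intro i
        obtain ⟨j, hj⟩ := hs i
        have hz1 : zval (φ i j) x = 1 := by
          unfold litSat at hj
          unfold zval
          by_cases hneg : (φ i j).neg
          · rw [if_pos hneg] at hj ⊢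
            have : x (φ i j).var = 0 := by simp [hx, hj]
            rw [this]; norm_num [relu]
          · rw [if_neg hneg] at hj ⊢
            have : x (φ i j).var = 1 := by simp [hx, hj]
            rw [this]; norm_num [relu]
        have hS : 1 ≤ ∑ j, zval (φ i j) x := by
          rw [← hz1]
          exact Finset.single_le_sum (fun j _ => zval_nonneg _ _) (Finset.mem_univ j)
        exact gadget_eq_one hS
      unfold cnfNet
      rw [Finset.sum_congr rfl (fun i _ => hgad i)]
      simp [relu]
  · rintro ⟨x, hx, hpos⟩
    refine ⟨fun k => (1:ℝ)/2 < x k, fun i => ?_⟩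
    unfold cnfNet at hpos
    rw [relu_pos_iff] at hpos
    have hsum_le : ∀ i₀ : Fin m, 0 < clauseGadget (φ i₀) x := by
      intro i₀
      have h1 : ∑ i ∈ Finset.univ.erase i₀, clauseGadget (φ i) x ≤ (m - 1 : ℝ) := by
        calc ∑ i ∈ Finset.univ.erase i₀, clauseGadget (φ i) x
            ≤ ∑ i ∈ Finset.univ.erase i₀, (1:ℝ) :=
              Finset.sum_le_sum (fun i _ => gadget_le_one _)
          _ = (m - 1 : ℝ) := by
              rw [Finset.sum_const, Finset.card_erase_of_mem (Finset.mem_univ _)]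
              simp
              rcases Nat.eq_zero_or_pos m with hm | hm
              · exact absurd i₀.pos (by omega)
              · push_cast [hm]; ring
      have h2 : ∑ i, clauseGadget (φ i) x
          = clauseGadget (φ i₀) x + ∑ i ∈ Finset.univ.erase i₀, clauseGadget (φ i) x :=
        (Finset.add_sum_erase _ _ (Finset.mem_univ i₀)).symm
      rw [h2] at hpos
      linarith
    have hg := hsum_le i
    unfold clauseGadget at hg
    have hS := pos_of_gadget_pos hg
    by_contra hcon
    unfold clauseSat at hcon
    push_neg at hcon
    have : ∑ j, zval (φ i j) x ≤ 0 := by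
      apply Finset.sum_nonpos
      intro j _
      have hj := hcon j
      unfold litSat at hj
      unfold zval
      by_cases hneg : (φ i j).neg
      · rw [if_pos hneg] at hj ⊢
        push_neg at hj
        have : 1 - 2 * x (φ i j).var ≤ 0 := by linarith
        unfold relu; exact max_le this le_rfl
      · rw [if_neg hneg] at hj ⊢
        have hle : x (φ i j).var ≤ 1/2 := by
          by_contra h'; push_neg at h'; exact hj h'
        have : 2 * x (φ i j).var - 1 ≤ 0 := by linarith
        unfold relu; exact max_le this le_rfl
    linarith
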